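/- Let $N > 1$ and let $a_1, \dots, a_k$ be positive integers with $a_{j+1} \ge N a_j$ for $1 \le j \le k-1$. Then the set $\Lambda = \{\alpha \in [0,1] : \|\alpha a_j\| \le 1/N \text{ for all } 1 \le j \le k\}$ has Lebesgue measure at most $4^k / N^k$. -/

import Mathlib

open MeasureTheory

lemma mycover (N aa : ℕ) (hN : 1 < N) (ha : 0 < aa) (c L : ℝ) (T : Set ℝ) :
    volume {α : ℝ | α ∈ Set.Icc c (c+L) ∧ |α * aa - round (α * aa)| ≤ 1/N ∧ α ∈ T}
      ≤ ∑ p ∈ Finset.Icc ⌈(aa:ℝ)*c - 1/N⌉ ⌊(aa:ℝ)*(c+L) + 1/N⌋,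
          volume {α : ℝ | α ∈ Set.Icc (((p:ℝ)-1/N)/aa) (((p:ℝ)+1/N)/aa) ∧ α ∈ T} := by
  refine le_trans (measure_mono ?_) (measure_biUnion_finset_le _ _)
  rintro α ⟨⟨hc, hcL⟩, hnear, hT⟩
  have haR : (0:ℝ) < aa := by exact_mod_cast ha
  rw [abs_le] at hnear
  simp only [Set.mem_iUnion]
  refine ⟨round (α * (aa:ℝ)), ?_, ⟨?_, ?_⟩, hT⟩
  · rw [Finset.mem_Icc]
    constructor
    · rw [Int.ceil_le]
      have : (aa:ℝ) * c ≤ α * aa := by nlinarith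
      push_cast
      linarith [hnear.2]
    · rw [Int.le_floor]
      have : α * aa ≤ (aa:ℝ) * (c+L) := by nlinarith
      push_cast
      linarith [hnear.1]
  · rw [div_le_iff₀ haR]
    push_cast
    linarith [hnear.2]
  · rw [le_div_iff₀ haR]
    push_cast
    linarith [hnear.1]

lemma mycard (N aa : ℕ) (hN : 1 < N) (ha : 0 < aa) (c L : ℝ) (hL : 0 ≤ L) :
    (((Finset.Icc ⌈(aa:ℝ)*c - 1/N⌉ ⌊(aa:ℝ)*(c+L) + 1/N⌋).card : ℕ) : ℝ)
      ≤ aa * L + 1 + 2/N := by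
  have hNR : (0:ℝ) < N := by positivity
  have h1 : (⌊(aa:ℝ)*(c+L)+1/N⌋ : ℝ) ≤ (aa:ℝ)*(c+L)+1/N := Int.floor_le _
  have h2 : (aa:ℝ)*c - 1/N ≤ (⌈(aa:ℝ)*c - 1/N⌉ : ℝ) := Int.le_ceil _
  rw [Int.card_Icc]
  have h3 := Int.toNat_eq_max (⌊(aa:ℝ)*(c+L) + 1/N⌋ + 1 - ⌈(aa:ℝ)*c - 1/N⌉)
  have h4 : ((((⌊(aa:ℝ)*(c+L) + 1/N⌋ + 1 - ⌈(aa:ℝ)*c - 1/N⌉).toNat : ℕ)) : ℝ)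
      = max ((⌊(aa:ℝ)*(c+L) + 1/N⌋:ℝ) + 1 - (⌈(aa:ℝ)*c - 1/N⌉:ℝ)) 0 := by
    exact_mod_cast congrArg (fun z : ℤ => (z:ℝ)) h3
  rw [h4]
  have haL : 0 ≤ (aa:ℝ) * L := by positivity
  rw [max_le_iff]
  have hexp : (aa:ℝ)*(c+L) = aa*c + aa*L := by ring
  constructor
  · have h5 : 2/(N:ℝ) = 1/N + 1/N := by ring
    linarith [h1, h2, hexp]
  · positivity

lemma mystep (N : ℕ) (hN : 1 < N) (d : ℕ) (hd : 1 ≤ d) (A0 A1 : ℝ) (h0 : 0 < A0)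
    (h1 : (N:ℝ)*A0 ≤ A1) :
    (A1 * (2/((N:ℝ)*A0)) + 1 + 2/(N:ℝ)) * ((4:ℝ)^(d-1)*2/((N:ℝ)^d*A1))
      ≤ (4:ℝ)^d*2/((N:ℝ)^(d+1)*A0) := by
  obtain ⟨e, rfl⟩ := Nat.exists_eq_add_of_le hd
  have hN2 : (2:ℝ) ≤ N := by exact_mod_cast hN
  have hNpos : (0:ℝ) < N := by linarith
  have h1' : 0 < A1 := lt_of_lt_of_le (by positivity) h1
  have hkey : A1 * (2/((N:ℝ)*A0)) + 1 + 2/N ≤ 4 * (A1 / ((N:ℝ)*A0)) := by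
    have hq : (1:ℝ) ≤ A1/((N:ℝ)*A0) := (one_le_div (by positivity)).2 h1
    have h2N : 2/(N:ℝ) ≤ 1 := by rw [div_le_one hNpos]; linarith
    have : A1 * (2/((N:ℝ)*A0)) = 2 * (A1/((N:ℝ)*A0)) := by ring
    rw [this]
    linarith
  have hsimp : 1 + e - 1 = e := by omega
  rw [hsimp]
  calc (A1 * (2/((N:ℝ)*A0)) + 1 + 2/(N:ℝ)) * ((4:ℝ)^e*2/((N:ℝ)^(1+e)*A1))
      ≤ (4 * (A1 / ((N:ℝ)*A0))) * ((4:ℝ)^e*2/((N:ℝ)^(1+e)*A1)) := by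
        apply mul_le_mul_of_nonneg_right hkey (by positivity)
    _ = (4:ℝ)^(1+e)*2/((N:ℝ)^(1+e+1)*A0) := by
        field_simp
        ring

lemma mykey (N : ℕ) (hN : 1 < N) : ∀ d : ℕ, 1 ≤ d → ∀ a : ℕ → ℕ, (∀ i, 0 < a i) →
    (∀ i, i + 1 < d → N * a i ≤ a (i+1)) → ∀ c L : ℝ, 0 ≤ L →
    volume {α : ℝ | α ∈ Set.Icc c (c+L) ∧ ∀ j < d, |α * a j - round (α * (a j : ℝ))| ≤ 1/N}
      ≤ ENNReal.ofReal (((a 0 : ℝ) * L + 1 + 2/N) * ((4:ℝ)^(d-1) * 2 / ((N:ℝ)^d * a 0))) := by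
  intro d
  induction d with
  | zero => omega
  | succ d ih =>
    intro _ a ha hgrow c L hL
    have hNR : (0:ℝ) < N := by positivity
    have hN2 : (2:ℝ) ≤ N := by exact_mod_cast hN
    have ha0 : (0:ℝ) < a 0 := by exact_mod_cast ha 0
    set T : Set ℝ := {α | ∀ j < d, |α * (a (j+1) : ℝ) - round (α * (a (j+1) : ℝ))| ≤ 1/N}
      with hT
    have hsub : {α : ℝ | α ∈ Set.Icc c (c+L) ∧
          ∀ j < d + 1, |α * a j - round (α * (a j : ℝ))| ≤ 1/N}
        ⊆ {α : ℝ | α ∈ Set.Icc c (c+L) ∧ |α * (a 0) - round (α * ((a 0 : ℕ):ℝ))| ≤ 1/N ∧ α ∈ T} := by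
      rintro α ⟨hI, hall⟩
      exact ⟨hI, hall 0 (by omega), fun j hj => hall (j+1) (by omega)⟩
    refine le_trans (measure_mono hsub) (le_trans (mycover N (a 0) hN (ha 0) c L T) ?_)
    have hper : ∀ p ∈ Finset.Icc ⌈((a 0 : ℕ):ℝ)*c - 1/N⌉ ⌊((a 0 : ℕ):ℝ)*(c+L) + 1/N⌋,
        volume {α : ℝ | α ∈ Set.Icc (((p:ℝ)-1/N)/(a 0)) (((p:ℝ)+1/N)/(a 0)) ∧ α ∈ T}
          ≤ ENNReal.ofReal ((4:ℝ)^d*2/((N:ℝ)^(d+1) * a 0)) := by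
      intro p _
      have hend : ((p:ℝ)+1/N)/(a 0) = ((p:ℝ)-1/N)/(a 0) + 2/((N:ℝ)*a 0) := by
        field_simp
        ring
      rcases Nat.eq_zero_or_pos d with hd0 | hd1
      · subst hd0
        have : {α : ℝ | α ∈ Set.Icc (((p:ℝ)-1/N)/(a 0)) (((p:ℝ)+1/N)/(a 0)) ∧ α ∈ T}
            ⊆ Set.Icc (((p:ℝ)-1/N)/(a 0)) (((p:ℝ)+1/N)/(a 0)) := fun α hα => hα.1
        refine le_trans (measure_mono this) ?_
        rw [Real.volume_Icc]
        apply ENNReal.ofReal_le_ofReal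
        rw [hend]
        rw [pow_zero, pow_one]
        ring_nf
        exact le_rfl
      · have hL2 : (0:ℝ) ≤ 2/((N:ℝ)*a 0) := by positivity
        have hset : {α : ℝ | α ∈ Set.Icc (((p:ℝ)-1/N)/(a 0)) (((p:ℝ)+1/N)/(a 0)) ∧ α ∈ T}
            = {α : ℝ | α ∈ Set.Icc (((p:ℝ)-1/N)/(a 0)) (((p:ℝ)-1/N)/(a 0) + 2/((N:ℝ)*a 0)) ∧
                ∀ j < d, |α * (a (j+1)) - round (α * ((a (j+1) : ℕ):ℝ))| ≤ 1/N} := by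
          rw [← hend]; rfl
        rw [hset]
        refine le_trans (ih hd1 (fun j => a (j+1)) (fun i => ha (i+1))
          (fun i hi => hgrow (i+1) (by omega)) _ _ hL2) ?_
        apply ENNReal.ofReal_le_ofReal
        have hgrow0 : (N:ℝ) * a 0 ≤ a 1 := by exact_mod_cast hgrow 0 (by omega)
        exact mystep N hN d hd1 (a 0) (a 1) ha0 hgrow0
    refine le_trans (Finset.sum_le_sum hper) ?_
    rw [Finset.sum_const, nsmul_eq_mul]
    rw [← ENNReal.ofReal_natCast, ← ENNReal.ofReal_mul (Nat.cast_nonneg _)]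
    apply ENNReal.ofReal_le_ofReal
    have hcard := mycard N (a 0) hN (ha 0) c L hL
    have hd1 : d + 1 - 1 = d := by omega
    rw [hd1]
    have hb : (0:ℝ) ≤ (4:ℝ)^d*2/((N:ℝ)^(d+1) * a 0) := by positivity
    exact mul_le_mul_of_nonneg_right hcard hb


/-- If `a 0, …, a (k-1)` are positive integers with `a (j+1) ≥ N * a j`, then the set of
`α ∈ [0,1]` with `‖α * a j‖ ≤ 1/N` for all `j` (distance to the nearest integer) has
Lebesgue measure at most `4^k / N^k`. -/
theorem stmt5 (k N : ℕ) (hN : 1 < N) (a : Fin k → ℕ) (ha : ∀ i, 0 < a i)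
    (hgrow : ∀ i : Fin k, ∀ h : i.1 + 1 < k, N * a i ≤ a ⟨i.1 + 1, h⟩) :
    volume {α : ℝ | α ∈ Set.Icc (0 : ℝ) 1 ∧
        ∀ j, |α * a j - round (α * a j)| ≤ 1 / N}
      ≤ ENNReal.ofReal ((4 : ℝ) ^ k / (N : ℝ) ^ k) := by
  have hNR : (0:ℝ) < N := by positivity
  have hN2 : (2:ℝ) ≤ N := by exact_mod_cast hN
  rcases Nat.eq_zero_or_pos k with hk0 | hk1
  · subst hk0
    have hs : {α : ℝ | α ∈ Set.Icc (0 : ℝ) 1 ∧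
        ∀ j : Fin 0, |α * a j - round (α * (a j : ℝ))| ≤ 1 / N} = Set.Icc (0:ℝ) 1 := by
      ext α; simp
    rw [hs, Real.volume_Icc]
    simp
  · -- k ≥ 1
    set b : ℕ → ℕ := fun j => a ⟨min j (k-1), by omega⟩ with hb
    have hbj : ∀ j (hj : j < k), b j = a ⟨j, hj⟩ := by
      intro j hj
      simp only [hb]
      congr 1
      exact Fin.ext (by simp; omega)
    have hb0 : (0:ℝ) < b 0 := by exact_mod_cast ha _
    set T : Set ℝ := {α | ∀ j < k - 1, |α * (b (j+1) : ℝ) - round (α * (b (j+1) : ℝ))| ≤ 1/N}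
      with hT
    have hsub : {α : ℝ | α ∈ Set.Icc (0 : ℝ) 1 ∧
          ∀ j, |α * a j - round (α * (a j : ℝ))| ≤ 1 / N}
        ⊆ {α : ℝ | α ∈ Set.Icc (0:ℝ) (0+1) ∧
            |α * (b 0) - round (α * ((b 0 : ℕ):ℝ))| ≤ 1/N ∧ α ∈ T} := by
      rintro α ⟨hI, hall⟩
      refine ⟨by rwa [zero_add], ?_, ?_⟩
      · rw [hbj 0 (by omega)]; exact hall _
      · intro j hj
        rw [hbj (j+1) (by omega)]
        exact hall _
    refine le_trans (measure_mono hsub) (le_trans (mycover N (b 0) hN (ha _) 0 1 T) ?_)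
    have hper : ∀ p ∈ Finset.Icc ⌈((b 0 : ℕ):ℝ)*0 - 1/N⌉ ⌊((b 0 : ℕ):ℝ)*(0+1) + 1/N⌋,
        volume {α : ℝ | α ∈ Set.Icc (((p:ℝ)-1/N)/(b 0)) (((p:ℝ)+1/N)/(b 0)) ∧ α ∈ T}
          ≤ ENNReal.ofReal ((4:ℝ)^(k-1)*2/((N:ℝ)^k * b 0)) := by
      intro p _
      have hend : ((p:ℝ)+1/N)/(b 0) = ((p:ℝ)-1/N)/(b 0) + 2/((N:ℝ)*b 0) := by
        field_simp; ring
      rcases Nat.lt_or_ge k 2 with hk2 | hk2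
      · -- k = 1
        have hk1' : k = 1 := by omega
        subst hk1'
        have hTuniv : {α : ℝ | α ∈ Set.Icc (((p:ℝ)-1/N)/(b 0)) (((p:ℝ)+1/N)/(b 0)) ∧ α ∈ T}
            ⊆ Set.Icc (((p:ℝ)-1/N)/(b 0)) (((p:ℝ)+1/N)/(b 0)) := fun α hα => hα.1
        refine le_trans (measure_mono hTuniv) ?_
        rw [Real.volume_Icc]
        apply ENNReal.ofReal_le_ofReal
        rw [hend]
        norm_num
      · -- k ≥ 2
        have hd1 : 1 ≤ k - 1 := by omega
        have hL2 : (0:ℝ) ≤ 2/((N:ℝ)*b 0) := by positivity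
        have hset : {α : ℝ | α ∈ Set.Icc (((p:ℝ)-1/N)/(b 0)) (((p:ℝ)+1/N)/(b 0)) ∧ α ∈ T}
            = {α : ℝ | α ∈ Set.Icc (((p:ℝ)-1/N)/(b 0)) (((p:ℝ)-1/N)/(b 0) + 2/((N:ℝ)*b 0)) ∧
                ∀ j < k - 1, |α * (b (j+1)) - round (α * ((b (j+1) : ℕ):ℝ))| ≤ 1/N} := by
          rw [← hend]; rfl
        rw [hset]
        have hgrow' : ∀ i, i + 1 < k - 1 → N * b (i+1) ≤ b (i+1+1) := by
          intro i hi
          rw [hbj (i+1) (by omega), hbj (i+2) (by omega)]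
          exact hgrow ⟨i+1, by omega⟩ (show i+1+1 < k by omega)
        refine le_trans (mykey N hN (k-1) hd1 (fun j => b (j+1)) (fun i => ha _)
          hgrow' _ _ hL2) ?_
        apply ENNReal.ofReal_le_ofReal
        have hgrow0 : (N:ℝ) * b 0 ≤ b 1 := by
          have := hgrow ⟨0, by omega⟩ (show 0+1 < k by omega)
          rw [hbj 0 (by omega), hbj 1 (by omega)]
          exact_mod_cast this
        have := mystep N hN (k-1) hd1 (b 0) (b 1) hb0 hgrow0
        rwa [Nat.sub_add_cancel hk1] at this
    refine le_trans (Finset.sum_le_sum hper) ?_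
    rw [Finset.sum_const, nsmul_eq_mul]
    rw [← ENNReal.ofReal_natCast, ← ENNReal.ofReal_mul (Nat.cast_nonneg _)]
    apply ENNReal.ofReal_le_ofReal
    -- card bound : card ≤ b 0 + 1
    have hcard : (((Finset.Icc ⌈((b 0 : ℕ):ℝ)*0 - 1/N⌉ ⌊((b 0 : ℕ):ℝ)*(0+1) + 1/N⌋).card : ℕ) : ℝ)
        ≤ (b 0 : ℝ) + 1 := by
      have hlo : (0:ℤ) ≤ ⌈((b 0 : ℕ):ℝ)*0 - 1/N⌉ := by
        have : ((-1 : ℤ) : ℝ) < ((b 0 : ℕ):ℝ)*0 - 1/N := by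
          push_cast
          have : 1/(N:ℝ) < 1 := by rw [div_lt_one hNR]; linarith
          linarith
        have := Int.lt_ceil.2 this
        omega
      have hhi : ⌊((b 0 : ℕ):ℝ)*(0+1) + 1/N⌋ ≤ (b 0 : ℤ) := by
        have : ((b 0 : ℕ):ℝ)*(0+1) + 1/N < ((b 0 : ℤ) + 1 : ℤ) := by
          push_cast
          have : 1/(N:ℝ) < 1 := by rw [div_lt_one hNR]; linarith
          linarith
        have := Int.floor_lt.2 this
        omega
      rw [Int.card_Icc]
      have h3 := Int.toNat_eq_max (⌊((b 0 : ℕ):ℝ)*(0+1) + 1/N⌋ + 1 - ⌈((b 0 : ℕ):ℝ)*0 - 1/N⌉)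
      have h4 : ⌊((b 0 : ℕ):ℝ)*(0+1) + 1/N⌋ + 1 - ⌈((b 0 : ℕ):ℝ)*0 - 1/N⌉ ≤ (b 0 : ℤ) + 1 := by
        omega
      have h5 : ((⌊((b 0 : ℕ):ℝ)*(0+1) + 1/N⌋ + 1 - ⌈((b 0 : ℕ):ℝ)*0 - 1/N⌉).toNat : ℤ)
          ≤ (b 0 : ℤ) + 1 := by omega
      exact_mod_cast h5
    have hb4 : (0:ℝ) ≤ (4:ℝ)^(k-1)*2/((N:ℝ)^k * b 0) := by positivity
    refine le_trans (mul_le_mul_of_nonneg_right hcard hb4) ?_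
    -- ((b0+1)) * (4^(k-1)*2/(N^k*b0)) ≤ 4^k/N^k
    have h4k : (4:ℝ)^k = 4^(k-1)*4 := by
      rw [← pow_succ]
      congr 1
      omega
    have hb1 : (1:ℝ) ≤ b 0 := by exact_mod_cast ha _
    rw [h4k]
    have hid : ((b 0:ℝ) + 1) * ((4:ℝ)^(k-1)*2/((N:ℝ)^k * b 0))
        = (((b 0:ℝ) + 1) * 2 / (b 0)) * ((4:ℝ)^(k-1)/((N:ℝ)^k)) := by
      field_simp
    rw [hid]
    have hfac : ((b 0:ℝ) + 1) * 2 / (b 0) ≤ 4 := by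
      rw [div_le_iff₀ hb0]
      nlinarith
    calc (((b 0:ℝ) + 1) * 2 / (b 0)) * ((4:ℝ)^(k-1)/((N:ℝ)^k))
        ≤ 4 * ((4:ℝ)^(k-1)/((N:ℝ)^k)) := by
          apply mul_le_mul_of_nonneg_right hfac (by positivity)
      _ = (4:ℝ)^(k-1)*4/(N:ℝ)^k := by ring
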